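/- Let n ≥ 2 and 1 ≤ k ≤ 2^{n−1}. Then v^n(k) = (k − 1) · 2^{C(n−1,2)} + λ#_{n−1}(k − 1), where λ#_{n−1}(k − 1) = code(λ(decode_{n−1}(k − 1))) is computed using the (n−1)-bit binary representation of k − 1. -/

import Mathlib

/-- Integer encoding of a binary vector (MSB first): code(x) = Σ x_j 2^(m-j). -/
def code (x : List Bool) : ℕ := x.foldl (fun a b => 2 * a + (if b then 1 else 0)) 0

/-- m-bit binary representation (MSB first) of an integer k. -/
def decode (m k : ℕ) : List Bool := (List.range m).map (fun j => k.testBit (m - 1 - j))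

/-- Agreement-indicator map: λ(x) lists 𝟙(x_i = x_j) for pairs i < j in lex order. -/
def lam : List Bool → List Bool
  | [] => []
  | a :: t => (t.map (fun b => a == b)) ++ lam t

/-- Integer-level map λ#_n. -/
def lambdaSharp (n k : ℕ) : ℕ := code (lam (decode n k))

/-- Encoded vertices of 𝟙-CUT(n): v^n(k) = λ#_n(2^(n-1) + k - 1). -/
def v (n k : ℕ) : ℕ := lambdaSharp n (2 ^ (n - 1) + k - 1)

lemma foldl_code (l : List Bool) (a : ℕ) :
    l.foldl (fun a b => 2 * a + (if b then 1 else 0)) a = a * 2 ^ l.length + code l := by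
  induction l generalizing a with
  | nil => simp [code]
  | cons b t ih =>
    simp only [List.foldl_cons, List.length_cons, code]
    rw [ih, ih (2 * 0 + _)]
    ring

lemma code_append (x y : List Bool) :
    code (x ++ y) = code x * 2 ^ y.length + code y := by
  unfold code
  rw [List.foldl_append, foldl_code]
  rfl

lemma length_decode (m k : ℕ) : (decode m k).length = m := by simp [decode]

lemma length_lam (t : List Bool) : (lam t).length = t.length.choose 2 := by
  induction t with
  | nil => simp [lam]
  | cons a t ih =>
    simp [lam, ih, Nat.choose_succ_succ, Nat.choose_one_right, Nat.add_comm]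

lemma decode_succ (m k : ℕ) : decode (m + 1) k = k.testBit m :: decode m k := by
  unfold decode
  rw [List.range_succ_eq_map, List.map_cons, List.map_map]
  simp only [Nat.add_sub_cancel, Nat.sub_zero]
  congr 1
  apply List.map_congr_left
  intro a ha
  simp only [Function.comp_apply]
  congr 1
  omega

lemma decode_mod (m k : ℕ) : decode m (k % 2 ^ m) = decode m k := by
  unfold decode
  apply List.map_congr_left
  intro j hj
  simp only [List.mem_range] at hj
  rw [Nat.testBit_mod_two_pow]
  have : m - 1 - j < m := by omega
  simp [this]

lemma code_decode (m k : ℕ) : code (decode m k) = k % 2 ^ m := by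
  induction m with
  | zero => simp [decode, code, Nat.mod_one]
  | succ m ih =>
    rw [decode_succ]
    have hc : code (k.testBit m :: decode m k)
        = (if k.testBit m then 1 else 0) * 2 ^ m + code (decode m k) := by
      rw [show (k.testBit m :: decode m k) = [k.testBit m] ++ decode m k from rfl,
        code_append, length_decode]
      simp [code]
    rw [hc, ih, pow_succ, Nat.mod_mul]
    rw [Nat.testBit_eq_decide_div_mod_eq]
    rcases Nat.mod_two_eq_zero_or_one (k / 2 ^ m) with h | h <;> simp [h] <;> try ring

theorem stmt_7 (n : ℕ) (hn : 2 ≤ n) (k : ℕ) (hk : 1 ≤ k) (hk2 : k ≤ 2 ^ (n - 1)) :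
    v n k = (k - 1) * 2 ^ Nat.choose (n - 1) 2 + lambdaSharp (n - 1) (k - 1) := by
  obtain ⟨m, rfl⟩ : ∃ m, n = m + 1 := ⟨n - 1, by omega⟩
  simp only [Nat.add_sub_cancel] at *
  set j := k - 1 with hj
  have hjlt : j < 2 ^ m := by omega
  have hx : 2 ^ m + k - 1 = 2 ^ m + j := by omega
  have hdec : decode (m + 1) (2 ^ m + j) = true :: decode m j := by
    rw [decode_succ]
    congr 1
    · rw [Nat.testBit_eq_decide_div_mod_eq]
      have : (2 ^ m + j) / 2 ^ m = 1 := by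
        rw [Nat.add_div_left _ (Nat.pow_pos (n := m) (by norm_num)) ]
        simp [Nat.div_eq_of_lt hjlt]
      simp [this]
    · rw [← decode_mod m (2 ^ m + j), Nat.add_mod_left, Nat.mod_eq_of_lt hjlt]
  have hmap : (decode m j).map (fun b => true == b) = decode m j := by
    simp
  show lambdaSharp (m + 1) (2 ^ m + k - 1) = _
  rw [hx]
  unfold lambdaSharp
  rw [hdec]
  show code ((decode m j).map (fun b => true == b) ++ lam (decode m j)) = _
  rw [hmap, code_append, code_decode, Nat.mod_eq_of_lt hjlt, length_lam, length_decode]
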